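/- For any two orthogonal matrices W₁, W₂ ∈ O(n,ℝ), the entrywise cubes satisfy ‖W₁^{∘3} − W₂^{∘3}‖_F ≤ 3n ‖W₁ − W₂‖₂. -/

import Mathlib

open Matrix Finset

/-- The spectral (ℓ²-operator) norm of a square real matrix. -/
noncomputable def specNorm {n : ℕ} (A : Matrix (Fin n) (Fin n) ℝ) : ℝ :=
  ‖LinearMap.toContinuousLinearMap (Matrix.toEuclideanLin A)‖

/-- Entrywise cube of a matrix. -/
def cube {n : ℕ} (W : Matrix (Fin n) (Fin n) ℝ) : Matrix (Fin n) (Fin n) ℝ :=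
  fun i j => W i j ^ 3

lemma abs_entry_le_specNorm {n : ℕ} (A : Matrix (Fin n) (Fin n) ℝ) (i j : Fin n) :
    |A i j| ≤ specNorm A := by
  set f := LinearMap.toContinuousLinearMap (Matrix.toEuclideanLin A) with hf
  set x : EuclideanSpace ℝ (Fin n) := EuclideanSpace.single j 1 with hxdef
  have hx : ‖x‖ = 1 := by rw [hxdef, EuclideanSpace.norm_single]; simp
  have hfx : ‖f x‖ ≤ specNorm A := by
    have h := f.le_opNorm x
    rw [hx, mul_one] at h
    exact h
  have hval : (f x) i = A i j := by
    show (Matrix.toEuclideanLin A) x i = A i j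
    rw [Matrix.toEuclideanLin_apply]
    have : x.ofLp = Pi.single j 1 := rfl
    rw [this, Matrix.mulVec_single]
    simp
  have habs : |(f x) i| ≤ ‖f x‖ := by
    rw [EuclideanSpace.norm_eq (f x)]
    have h1 : |(f x) i| = Real.sqrt (‖(f x) i‖ ^ 2) := by
      rw [Real.sqrt_sq_eq_abs]; simp
    rw [h1]
    apply Real.sqrt_le_sqrt
    exact Finset.single_le_sum (f := fun k => ‖(f x) k‖ ^ 2)
      (fun k _ => by positivity) (Finset.mem_univ i)
  rw [hval] at habs
  linarith

/-- Lipschitz bound for entrywise cubes of orthogonal matrices: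
`‖W₁^{∘3} − W₂^{∘3}‖_F ≤ 3n ‖W₁ − W₂‖₂`. -/
theorem cube_lipschitz_orthogonal {n : ℕ}
    (W₁ W₂ : Matrix (Fin n) (Fin n) ℝ)
    (hW₁ : W₁ᵀ * W₁ = 1) (hW₂ : W₂ᵀ * W₂ = 1) :
    Real.sqrt (∑ i, ∑ j, (cube W₁ i j - cube W₂ i j) ^ 2)
      ≤ 3 * (n : ℝ) * specNorm (W₁ - W₂) := by
  set M := specNorm (W₁ - W₂) with hMdef
  have hM0 : 0 ≤ M := norm_nonneg _
  have hcol : ∀ (W : Matrix (Fin n) (Fin n) ℝ), Wᵀ * W = 1 →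
      ∀ i j, (W i j) ^ 2 ≤ 1 := by
    intro W hW i j
    have h : (Wᵀ * W) j j = 1 := by rw [hW]; simp
    rw [Matrix.mul_apply] at h
    simp only [Matrix.transpose_apply] at h
    have : ∑ k, W k j * W k j = 1 := h
    calc (W i j)^2 = W i j * W i j := sq (W i j)
    _ ≤ ∑ k, W k j * W k j :=
        Finset.single_le_sum (f := fun k => W k j * W k j)
          (fun k _ => mul_self_nonneg _) (Finset.mem_univ i)
    _ = 1 := this
  have key : ∀ i j, (cube W₁ i j - cube W₂ i j) ^ 2 ≤ 9 * M ^ 2 := by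
    intro i j
    have ha := hcol W₁ hW₁ i j
    have hb := hcol W₂ hW₂ i j
    have hab : |W₁ i j - W₂ i j| ≤ M := by
      have := abs_entry_le_specNorm (W₁ - W₂) i j
      simpa using this
    have hab2 : (W₁ i j - W₂ i j) ^ 2 ≤ M ^ 2 := by
      have := sq_abs (W₁ i j - W₂ i j)
      nlinarith [abs_nonneg (W₁ i j - W₂ i j)]
    show (W₁ i j ^ 3 - W₂ i j ^ 3) ^ 2 ≤ 9 * M ^ 2
    set a := W₁ i j
    set b := W₂ i j
    have h9 : (a ^ 2 + a * b + b ^ 2) ^ 2 ≤ 9 := by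
      nlinarith [sq_nonneg (a - b), sq_nonneg (a + b), sq_nonneg (a * b),
        sq_nonneg a, sq_nonneg b]
    have heq : (a ^ 3 - b ^ 3) ^ 2 = (a - b) ^ 2 * (a ^ 2 + a * b + b ^ 2) ^ 2 := by
      ring
    rw [heq]
    calc (a - b) ^ 2 * (a ^ 2 + a * b + b ^ 2) ^ 2
        ≤ (a - b) ^ 2 * 9 := by
          apply mul_le_mul_of_nonneg_left h9 (sq_nonneg _)
    _ ≤ M ^ 2 * 9 := by nlinarith
    _ = 9 * M ^ 2 := by ring
  have hsum : (∑ i, ∑ j, (cube W₁ i j - cube W₂ i j) ^ 2)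
      ≤ (3 * (n : ℝ) * M) ^ 2 := by
    calc (∑ i, ∑ j, (cube W₁ i j - cube W₂ i j) ^ 2)
        ≤ ∑ _i : Fin n, ∑ _j : Fin n, 9 * M ^ 2 := by
          apply Finset.sum_le_sum; intro i _
          apply Finset.sum_le_sum; intro j _
          exact key i j
    _ = (n : ℝ) * ((n : ℝ) * (9 * M ^ 2)) := by
          simp [Finset.sum_const, Finset.card_univ]
    _ = (3 * (n : ℝ) * M) ^ 2 := by ring
  calc Real.sqrt (∑ i, ∑ j, (cube W₁ i j - cube W₂ i j) ^ 2)
      ≤ Real.sqrt ((3 * (n : ℝ) * M) ^ 2) := Real.sqrt_le_sqrt hsum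
  _ = 3 * (n : ℝ) * M := Real.sqrt_sq (by positivity)
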